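/- Let D ≥ 1, r > 0, c > 0, and let μ be a Borel measure on ℝ^D of the form μ = δ₀ + ν, where ν is a nonnegative measure supported in {x ∈ ℝ^D : |x| ≥ r}, and suppose μ is tempered in the sense that ∫ (1+|x|)^{−s} dμ(x) < ∞ for some s > 0. Assume that for every nonnegative real-valued Schwartz function h : ℝ^D → ℝ, the integral ∫ ĥ dμ is real and satisfies ∫ ĥ dμ ≥ c·h(0) (i.e. μ̂ ≥ c δ₀ as a tempered distribution). Then every Schwartz function f : ℝ^D → ℝ with f(x) ≤ 0 for |x| ≥ r and with f̂ taking nonnegative real values everywhere satisfies f(0) ≥ c·f̂(0). Consequently the Cohn–Elkies linear programming bound for center density in ℝ^D is at least c·(r/2)^D. -/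

import Mathlib

open MeasureTheory FourierTransform SchwartzMap

/-- Postcomposition of a Schwartz function with a continuous linear map. -/
noncomputable def SchwartzMap.postcomp {E F G : Type*} [NormedAddCommGroup E] [NormedSpace ℝ E]
    [NormedAddCommGroup F] [NormedSpace ℝ F] [NormedAddCommGroup G] [NormedSpace ℝ G]
    (g : F →L[ℝ] G) (f : 𝓢(E, F)) : 𝓢(E, G) where
  toFun x := g (f x)
  smooth' := g.contDiff.comp f.smooth'
  decay' := by
    intro k n
    obtain ⟨C, hC⟩ := f.decay' k n
    refine ⟨‖g‖ * C, fun x => ?_⟩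
    have h1 : iteratedFDeriv ℝ n (fun x => g (f x)) x
        = g.compContinuousMultilinearMap (iteratedFDeriv ℝ n f x) :=
      g.iteratedFDeriv_comp_left f.smooth'.contDiffAt (by exact_mod_cast le_top)
    rw [h1]
    have h2 : ‖g.compContinuousMultilinearMap (iteratedFDeriv ℝ n f x)‖
        ≤ ‖g‖ * ‖iteratedFDeriv ℝ n f x‖ :=
      g.norm_compContinuousMultilinearMap_le _
    have h4 : (0:ℝ) ≤ ‖x‖ ^ k := by positivity
    calc ‖x‖ ^ k * ‖g.compContinuousMultilinearMap (iteratedFDeriv ℝ n f x)‖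
        ≤ ‖x‖ ^ k * (‖g‖ * ‖iteratedFDeriv ℝ n f x‖) := mul_le_mul_of_nonneg_left h2 h4
      _ = ‖g‖ * (‖x‖ ^ k * ‖iteratedFDeriv ℝ n f x‖) := by ring
      _ ≤ ‖g‖ * C := mul_le_mul_of_nonneg_left (hC x) (norm_nonneg g)

/-- Weak duality for the Cohn–Elkies linear program (Theorem 1.5 of the paper):
if `μ = δ₀ + ν` is a tempered measure on `ℝ^D` with `ν ≥ 0` supported in
`{|x| ≥ r}` and `μ̂ ≥ c·δ₀` (tested against Fourier transforms of nonnegative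
Schwartz functions), then every Schwartz function `f` with `f ≤ 0` outside
radius `r` and `f̂ ≥ 0` satisfies `f(0) ≥ c·f̂(0)`; consequently the
Cohn–Elkies LP bound for center density in `ℝ^D` is at least `c·(r/2)^D`. -/
theorem lp_weak_duality
    (D : ℕ) (hD : 0 < D) (r c : ℝ) (hr : 0 < r) (hc : 0 < c)
    (ν μ : Measure (EuclideanSpace ℝ (Fin D)))
    (hμ : μ = Measure.dirac 0 + ν)
    (hsupp : ν {x : EuclideanSpace ℝ (Fin D) | ‖x‖ < r} = 0)
    (htemp : ∃ s : ℝ, 0 < s ∧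
      Integrable (fun x : EuclideanSpace ℝ (Fin D) => (1 + ‖x‖) ^ (-s)) μ)
    (hμhat : ∀ h : 𝓢(EuclideanSpace ℝ (Fin D), ℝ), (∀ x, 0 ≤ h x) →
      (∫ x, 𝓕 (fun y => (h y : ℂ)) x ∂μ).im = 0 ∧
      c * h 0 ≤ (∫ x, 𝓕 (fun y => (h y : ℂ)) x ∂μ).re) :
    ∀ f : 𝓢(EuclideanSpace ℝ (Fin D), ℝ),
      (∀ x, r ≤ ‖x‖ → f x ≤ 0) →
      (∀ ξ, 0 ≤ (𝓕 (fun y => (f y : ℂ)) ξ).re ∧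
        (𝓕 (fun y => (f y : ℂ)) ξ).im = 0) →
      c * (𝓕 (fun y => (f y : ℂ)) 0).re ≤ f 0 ∧
      (0 < (𝓕 (fun y => (f y : ℂ)) 0).re →
        c * (r / 2) ^ D ≤ (r / 2) ^ D * f 0 / (𝓕 (fun y => (f y : ℂ)) 0).re) := by
  intro f hf hfhat
  classical
  set E := EuclideanSpace ℝ (Fin D) with hE
  -- the complexification of `f`
  let fc : 𝓢(E, ℂ) := SchwartzMap.postcomp Complex.ofRealCLM f
  have hfc : ⇑fc = fun y => ((f y : ℝ) : ℂ) := rfl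
  -- its Fourier transform, as a Schwartz function
  let g : 𝓢(E, ℂ) := fourierTransformCLM ℂ fc
  have hgdef : ⇑g = 𝓕 (fun y => ((f y : ℝ) : ℂ)) := by
    rw [show (fun y => ((f y : ℝ) : ℂ)) = ⇑fc from rfl]
    rfl
  -- the real part of the Fourier transform, a nonnegative Schwartz function
  let h : 𝓢(E, ℝ) := SchwartzMap.postcomp Complex.reCLM g
  have hh : ∀ y, h y = (𝓕 (fun y => ((f y : ℝ) : ℂ)) y).re := by
    intro y
    show (g y).re = _
    rw [hgdef]
  have hhpos : ∀ y, 0 ≤ h y := fun y => (hh y) ▸ (hfhat y).1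
  have hcoe : (fun y => ((h y : ℝ) : ℂ)) = ⇑g := by
    funext y
    apply Complex.ext
    · simp only [Complex.ofReal_re]
      exact (hh y).trans (by rw [hgdef])
    · simp only [Complex.ofReal_im]
      rw [hgdef]
      exact ((hfhat y).2).symm
  -- Fourier inversion: `𝓕 g x = fc (-x)`
  have hfourg : ∀ x : E, 𝓕 (⇑g) x = fc (-x) := by
    intro x
    have h1 : 𝓕 (⇑g) x = 𝓕⁻ (⇑g) (-x) := by
      rw [Real.fourierInv_eq_fourier_neg, neg_neg]
    rw [h1]
    show 𝓕⁻ (𝓕 ⇑fc) (-x) = fc (-x)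
    exact (fc.integrable (μ := volume)).fourierInv_fourier_eq
      ((fourierTransformCLM ℂ fc).integrable (μ := volume)) fc.continuous.continuousAt
  -- integrability of `x ↦ f (-x)` against `μ`, via the temperate growth bound
  obtain ⟨s, hs, hint⟩ := htemp
  obtain ⟨k, hk⟩ := exists_nat_ge s
  set C : ℝ := 2 ^ k * ((Finset.Iic ((k, 0) : ℕ × ℕ)).sup (schwartzSeminormFamily ℝ E ℝ)) f
    with hC
  have hCnn : 0 ≤ C := by
    apply mul_nonneg (by positivity)
    exact apply_nonneg _ _
  have hbound : ∀ x : E, ‖f x‖ ≤ C * (1 + ‖x‖) ^ (-s) := by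
    intro x
    have h1 : (1 + ‖x‖) ^ k * ‖f x‖ ≤ C := by
      have := SchwartzMap.one_add_le_sup_seminorm_apply (𝕜 := ℝ) (m := ((k, 0) : ℕ × ℕ))
        le_rfl le_rfl f x
      simp only [norm_iteratedFDeriv_zero] at this; exact this
    have hb : (1:ℝ) ≤ 1 + ‖x‖ := by
      have := norm_nonneg x; linarith
    have hbpos : (0:ℝ) < 1 + ‖x‖ := by linarith
    have hpow : (0:ℝ) < (1 + ‖x‖) ^ k := by positivity
    have h2 : ((1 + ‖x‖) ^ k)⁻¹ ≤ (1 + ‖x‖) ^ (-s) := by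
      rw [← Real.rpow_natCast (1 + ‖x‖) k, ← Real.rpow_neg hbpos.le]
      exact Real.rpow_le_rpow_of_exponent_le hb (by linarith)
    have h3 : ‖f x‖ ≤ C * ((1 + ‖x‖) ^ k)⁻¹ := by
      rw [← div_eq_mul_inv, le_div_iff₀ hpow, mul_comm]
      exact h1
    calc ‖f x‖ ≤ C * ((1 + ‖x‖) ^ k)⁻¹ := h3
      _ ≤ C * (1 + ‖x‖) ^ (-s) := mul_le_mul_of_nonneg_left h2 hCnn
  have hmeas : AEStronglyMeasurable (fun x : E => f (-x)) μ :=
    (f.continuous.comp continuous_neg).aestronglyMeasurable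
  have hintf : Integrable (fun x : E => f (-x)) μ := by
    refine (hint.const_mul C).mono' hmeas (Filter.Eventually.of_forall fun x => ?_)
    simpa [norm_neg] using hbound (-x)
  have hpair := integrable_add_measure.mp (hμ ▸ hintf)
  -- a.e. on ν, `f (-x) ≤ 0`
  have hcompl : ∀ᵐ x ∂ν, f (-x) ≤ 0 := by
    have hae : ∀ᵐ x ∂ν, r ≤ ‖x‖ := by
      rw [ae_iff]
      refine measure_mono_null ?_ hsupp
      intro x hx
      simpa [not_le] using hx
    filter_upwards [hae] with x hx
    exact hf (-x) (by simpa using hx)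
  -- compute the pairing integral
  have hre : (∫ x, 𝓕 (fun y => ((h y : ℝ) : ℂ)) x ∂μ) = ((∫ x, f (-x) ∂μ : ℝ) : ℂ) := by
    rw [hcoe]
    rw [show (𝓕 ⇑g) = fun x : E => ((f (-x) : ℝ) : ℂ) from funext hfourg]
    exact integral_ofReal
  obtain ⟨him, hge⟩ := hμhat h hhpos
  rw [hre] at hge
  simp only [Complex.ofReal_re] at hge
  have hsplit : ∫ x, f (-x) ∂μ = f 0 + ∫ x, f (-x) ∂ν := by
    rw [hμ, integral_add_measure hpair.1 hpair.2, integral_dirac]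
    simp
    rfl
  have hν0 : ∫ x, f (-x) ∂ν ≤ 0 := integral_nonpos_of_ae hcompl
  have hh0 : h 0 = (𝓕 (fun y => ((f y : ℝ) : ℂ)) 0).re := hh 0
  have key : c * (𝓕 (fun y => ((f y : ℝ) : ℂ)) 0).re ≤ f 0 := by
    rw [← hh0]
    linarith [hge, hsplit ▸ hge]
  refine ⟨key, fun hpos => ?_⟩
  have h1 : c ≤ f 0 / (𝓕 (fun y => ((f y : ℝ) : ℂ)) 0).re :=
    (le_div_iff₀ hpos).mpr key
  have hp : (0:ℝ) < (r / 2) ^ D := by positivity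
  calc c * (r / 2) ^ D = (r / 2) ^ D * c := mul_comm _ _
    _ ≤ (r / 2) ^ D * (f 0 / (𝓕 (fun y => ((f y : ℝ) : ℂ)) 0).re) :=
        mul_le_mul_of_nonneg_left h1 hp.le
    _ = (r / 2) ^ D * f 0 / (𝓕 (fun y => ((f y : ℝ) : ℂ)) 0).re := (mul_div_assoc _ _ _).symm
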